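/- For every integer k ≥ 1, the double contour integral (1/(2πi))² ∮_{|s|=1/16} ∮_{|w|=1/16} (1-s)^k (1-w)^k / ( (1-s-w) s^k w^k ) dw ds (both circles positively oriented) equals ∑_{i=1}^k ∑_{j=1}^k (-1)^{i+j} C(k,i) C(k,j) C(i+j-2, i-1), and this double sum equals k. -/

import Mathlib

open Complex

section Helpers
open Finset Metric

namespace DCIproof

lemma two_pi_I_ne : (2 * ↑Real.pi * I : ℂ) ≠ 0 := by
  simp [Real.pi_ne_zero, I_ne_zero]

lemma int_zpow (n : ℤ) : (∮ z in C((0:ℂ), (1/16:ℝ)), z ^ n) =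
    if n = -1 then (2 * Real.pi * I) else 0 := by
  split_ifs with h
  · subst h
    have := circleIntegral.integral_sub_center_inv (0:ℂ) (R := (1/16:ℝ)) (by norm_num)
    simp only [sub_zero] at this
    rw [← this]
    apply circleIntegral.integral_congr (by norm_num)
    intro z hz
    simp [zpow_neg_one]
  · have := circleIntegral.integral_sub_zpow_of_ne h 0 0 (1/16:ℝ)
    simpa using this

lemma integrable_zpow' (n : ℤ) :
    CircleIntegrable (fun z => z ^ n) (0:ℂ) (1/16:ℝ) := by
  have h : CircleIntegrable (fun z : ℂ => (z - 0) ^ n) (0:ℂ) (1/16:ℝ) := by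
    rw [circleIntegrable_sub_zpow_iff]
    right; right
    simp only [mem_sphere_iff_norm, sub_zero, norm_zero]
    intro h
    rw [_root_.abs_of_nonneg (by norm_num : (0:ℝ) ≤ 1/16)] at h
    norm_num at h
  simpa using h

lemma _root_.CircleIntegrable.cmul {f : ℂ → ℂ} {c : ℂ} {R : ℝ} (h : CircleIntegrable f c R) (a : ℂ) :
    CircleIntegrable (fun z => a * f z) c R :=
  IntervalIntegrable.const_mul h a

lemma int_finset_sum {ι} (t : Finset ι) (f : ι → ℂ → ℂ) {c : ℂ} {R : ℝ}
    (h : ∀ i ∈ t, CircleIntegrable (f i) c R) :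
    (∮ z in C(c, R), ∑ i ∈ t, f i z) = ∑ i ∈ t, ∮ z in C(c, R), f i z := by
  simp only [circleIntegral, smul_sum]
  rw [intervalIntegral.integral_finset_sum]
  exact fun i hi => (h i hi).out

lemma key (b : ℂ) (j κ : ℕ) (hκ : 1 ≤ κ) :
    (∮ z in C((0:ℂ), (1/16:ℝ)), (b - z) ^ j * z ^ (-(κ:ℤ))) =
      (2 * Real.pi * I) * (j.choose (κ-1)) * (-1)^(κ-1) * b^(j-(κ-1)) := by
  have heq : Set.EqOn (fun z : ℂ => (b - z) ^ j * z ^ (-(κ:ℤ)))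
      (fun z : ℂ => ∑ t ∈ range (j+1), (((-1:ℂ))^t * b^(j-t) * (j.choose t)) * z ^ ((t:ℤ) - κ))
      (sphere (0:ℂ) (1/16:ℝ)) := by
    intro z hz
    have hz0 : z ≠ 0 := by
      simp only [mem_sphere_iff_norm, sub_zero] at hz
      intro h; rw [h] at hz; norm_num at hz
    simp only
    rw [sub_eq_add_neg b z, add_comm, add_pow, Finset.sum_mul]
    refine Finset.sum_congr rfl fun t ht => ?_
    rw [zpow_sub₀ hz0, zpow_natCast, neg_pow]
    simp only [zpow_neg, zpow_natCast]
    field_simp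
  rw [circleIntegral.integral_congr (by norm_num) heq,
    int_finset_sum _ _ (fun t _ => (integrable_zpow' _).cmul _)]
  have hval : ∀ t ∈ range (j+1),
      (∮ z in C((0:ℂ), (1/16:ℝ)), (((-1:ℂ))^t * b^(j-t) * (j.choose t)) * z ^ ((t:ℤ) - κ)) =
      if t = κ - 1 then (2 * Real.pi * I) * ((-1:ℂ))^t * b^(j-t) * (j.choose t) else 0 := by
    intro t _
    rw [circleIntegral.integral_const_mul, int_zpow]
    have : ((t:ℤ) - κ = -1) ↔ (t = κ - 1) := by omega
    split_ifs with h1 h2 h2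
    · ring
    · exact absurd (this.mp h1) h2
    · exact absurd (this.mpr h2) h1
    · ring
  rw [Finset.sum_congr rfl hval]
  by_cases hj : κ - 1 ≤ j
  · rw [Finset.sum_ite_eq' (range (j+1)) (κ-1)
      (fun x => 2 * (Real.pi:ℂ) * I * (-1) ^ x * b ^ (j - x) * (j.choose x)), if_pos (by simp; omega)]
    ring
  · rw [Finset.sum_eq_zero, Nat.choose_eq_zero_of_lt (by omega)]
    · simp
    · intro t ht
      simp only [mem_range] at ht
      rw [if_neg (by omega)]

lemma int_pole_out (a : ℂ) (ha : (1/16:ℝ) < ‖a‖) (k : ℕ) :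
    (∮ w in C((0:ℂ), (1/16:ℝ)), (1 - w)^k * (a - w)⁻¹) = 0 := by
  have hd : ∀ z ∈ closedBall (0:ℂ) (1/16:ℝ), DifferentiableAt ℂ (fun w : ℂ => (1 - w)^k * (a - w)⁻¹) z := by
    intro z hz
    have hz' : ‖z‖ ≤ 1/16 := by simpa using mem_closedBall_zero_iff.mp hz
    have hne : a - z ≠ 0 := by
      intro h
      have : a = z := by linear_combination h
      rw [this] at ha; linarith
    exact (((differentiableAt_const (1:ℂ)).sub differentiableAt_id).pow k).mul
      (((differentiableAt_const a).sub differentiableAt_id).inv hne)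
  exact circleIntegral_eq_zero_of_differentiable_on_off_countable (by norm_num)
    Set.countable_empty
    (fun z hz => (hd z hz).continuousAt.continuousWithinAt)
    (fun z hz => hd z (ball_subset_closedBall hz.1))

lemma int_add {f g : ℂ → ℂ} {c : ℂ} {R : ℝ} (hf : CircleIntegrable f c R)
    (hg : CircleIntegrable g c R) :
    (∮ z in C(c, R), (f z + g z)) = (∮ z in C(c, R), f z) + ∮ z in C(c, R), g z := by
  simp only [circleIntegral, smul_add]
  exact intervalIntegral.integral_add hf.out hg.out

lemma circleIntegrable_sum {ι : Type*} (t : Finset ι) (f : ι → ℂ → ℂ) {c : ℂ} {R : ℝ}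
    (h : ∀ i ∈ t, CircleIntegrable (f i) c R) :
    CircleIntegrable (fun z => ∑ i ∈ t, f i z) c R := by
  classical
  induction t using Finset.induction with
  | empty => simpa using circleIntegrable_const (0:ℂ) c R
  | @insert a t hni ih =>
    simp only [Finset.sum_insert hni]
    exact (h a (Finset.mem_insert_self a t)).add
      (ih (fun i hi => h i (Finset.mem_insert_of_mem hi)))

lemma contOn_shape (c : ℂ) (k : ℕ) (n : ℤ) :
    ContinuousOn (fun w : ℂ => (c - w)^k * w ^ n) (sphere (0:ℂ) (1/16:ℝ)) := by
  apply ContinuousOn.mul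
  · exact ((continuous_const.sub continuous_id).pow k).continuousOn
  · exact continuousOn_id.zpow₀ n (fun z hz => Or.inl (by
      simp only [mem_sphere_iff_norm, sub_zero] at hz
      simp only [id_eq]
      intro h; rw [h] at hz; norm_num at hz))

lemma integrable_shape (cst c : ℂ) (k : ℕ) (n : ℤ) :
    CircleIntegrable (fun w : ℂ => cst * ((c - w)^k * w ^ n)) (0:ℂ) (1/16:ℝ) :=
  ((contOn_shape c k n).circleIntegrable (by norm_num)).cmul cst

lemma integrable_pole (cst a : ℂ) (ha : (1/16:ℝ) < ‖a‖) (k : ℕ) :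
    CircleIntegrable (fun w : ℂ => cst * ((1 - w)^k * (a - w)⁻¹)) (0:ℂ) (1/16:ℝ) := by
  apply CircleIntegrable.cmul
  apply ContinuousOn.circleIntegrable (by norm_num)
  apply ContinuousOn.mul
  · exact ((continuous_const.sub continuous_id).pow k).continuousOn
  · apply ContinuousOn.inv₀ (continuous_const.sub continuous_id).continuousOn
    intro w hw
    have hwabs : ‖w‖ = 1/16 := by
      simpa [mem_sphere_iff_norm, sub_zero] using hw
    simp only [Pi.sub_apply, id_eq]
    intro h
    have : a = w := by linear_combination h
    rw [this, hwabs] at ha; linarith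

lemma inner_int (k : ℕ) (hk : 1 ≤ k) (s : ℂ) (hs : s ∈ sphere (0:ℂ) (1/16:ℝ)) :
    (∮ w in C((0:ℂ), (1/16:ℝ)), (1 - s) ^ k * (1 - w) ^ k / ((1 - s - w) * s ^ k * w ^ k)) =
    ∑ m ∈ range k, ((2 * Real.pi * I) * ((-1:ℂ)^(k-m-1) * (k.choose (k-m-1)))
      * ((1 - s)^(k-m-1) * s ^ (-(k:ℤ)))) := by
  have habs : ‖s‖ = 1/16 := by
    simpa [mem_sphere_iff_norm, sub_zero] using hs
  have hs0 : s ≠ 0 := by intro h; rw [h] at habs; simp at habs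
  have ha : (1/16:ℝ) < ‖1 - s‖ := by
    have h1 := norm_sub_norm_le (1:ℂ) s
    rw [norm_one] at h1
    simp only [map_one, habs] at h1
    linarith
  have ha0 : (1:ℂ) - s ≠ 0 := by
    intro h; rw [h] at ha; simp at ha; linarith
  have heq : Set.EqOn
      (fun w : ℂ => (1 - s) ^ k * (1 - w) ^ k / ((1 - s - w) * s ^ k * w ^ k))
      (fun w : ℂ => ((1 - s)^k / s^k) *
        ((∑ m ∈ range k, ((1 - s)^(m+1))⁻¹ * ((1 - w)^k * w ^ ((m:ℤ) - k)))
          + ((1 - s)^k)⁻¹ * ((1 - w)^k * (1 - s - w)⁻¹)))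
      (sphere (0:ℂ) (1/16:ℝ)) := by
    intro w hw
    have hwabs : ‖w‖ = 1/16 := by
      simpa [mem_sphere_iff_norm, sub_zero] using hw
    have hw0 : w ≠ 0 := by intro h; rw [h] at hwabs; simp at hwabs
    have haw : 1 - s - w ≠ 0 := by
      intro h
      have h2 : (1:ℂ) - s = w := by linear_combination h
      rw [h2, hwabs] at ha; linarith
    simp only
    have hsum : (∑ m ∈ range k, ((1 - s)^(m+1))⁻¹ * ((1 - w)^k * w ^ ((m:ℤ) - k)))
        = (∑ m ∈ range k, w^m * (1 - s)^(k-1-m)) * ((1 - w)^k * ((1 - s)^k * w^k)⁻¹) := by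
      rw [Finset.sum_mul]
      refine Finset.sum_congr rfl fun m hm => ?_
      have hm' : m < k := mem_range.mp hm
      have hzp : w ^ ((m:ℤ) - k) = w ^ m * (w ^ k)⁻¹ := by
        rw [zpow_sub₀ hw0, zpow_natCast, zpow_natCast, div_eq_mul_inv]
      rw [hzp]
      have hpow : (1 - s)^(k-1-m) * (1 - s)^(m+1) = (1 - s)^k := by
        rw [← pow_add]; congr 1; omega
      rw [← hpow]
      field_simp
    rw [hsum]
    have hS : (∑ m ∈ range k, w^m * (1 - s)^(k-1-m))
        = ((1 - s)^k - w^k) / (1 - s - w) := by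
      rw [eq_div_iff haw]
      have geo := geom_sum₂_mul w (1 - s) k
      linear_combination -geo
    rw [hS]
    have final : ∀ (A Sk Wk B d : ℂ), d ≠ 0 → Sk ≠ 0 → Wk ≠ 0 → A ≠ 0 →
        A * B / (d * Sk * Wk) = A / Sk * ((A - Wk)/d * (B * (A * Wk)⁻¹) + A⁻¹ * (B * d⁻¹)) := by
      intro A Sk Wk B d hd hS' hW' hA'
      field_simp
      ring
    exact final ((1-s)^k) (s^k) (w^k) ((1-w)^k) (1-s-w) haw (pow_ne_zero _ hs0)
      (pow_ne_zero _ hw0) (pow_ne_zero _ ha0)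
  rw [circleIntegral.integral_congr (by norm_num) heq]
  rw [circleIntegral.integral_const_mul]
  rw [int_add (f := fun w : ℂ => ∑ m ∈ range k, ((1 - s)^(m+1))⁻¹ * ((1 - w)^k * w ^ ((m:ℤ) - k)))
      (g := fun w : ℂ => ((1 - s)^k)⁻¹ * ((1 - w)^k * (1 - s - w)⁻¹))
      (circleIntegrable_sum _ _ (fun m _ => integrable_shape _ 1 k ((m:ℤ) - k)))
      (integrable_pole _ _ ha k)]
  rw [int_finset_sum (range k)
      (fun m (w : ℂ) => ((1 - s)^(m+1))⁻¹ * ((1 - w)^k * w ^ ((m:ℤ) - k)))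
      (fun m _ => (integrable_shape _ 1 k ((m:ℤ) - k)))]
  rw [circleIntegral.integral_const_mul, int_pole_out (1-s) ha k, mul_zero, add_zero]
  have hterm : ∀ m ∈ range k,
      (∮ w in C((0:ℂ), (1/16:ℝ)), ((1 - s)^(m+1))⁻¹ * ((1 - w)^k * w ^ ((m:ℤ) - k)))
      = ((1 - s)^(m+1))⁻¹ * ((2 * Real.pi * I) * (k.choose (k-m-1)) * (-1:ℂ)^(k-m-1)) := by
    intro m hm
    have hm' : m < k := mem_range.mp hm
    rw [circleIntegral.integral_const_mul]
    have hcast : ((m:ℤ) - k) = -(((k - m:ℕ)):ℤ) := by omega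
    simp only [hcast]
    rw [key 1 k (k - m) (by omega), one_pow]
    ring
  rw [Finset.sum_congr rfl hterm, Finset.mul_sum]
  refine Finset.sum_congr rfl fun m hm => ?_
  have hm' : m < k := mem_range.mp hm
  have hzp : s ^ (-(k:ℤ)) = (s ^ k)⁻¹ := by rw [zpow_neg, zpow_natCast]
  rw [hzp]
  have hpow : (1 - s)^(k-m-1) * (1 - s)^(m+1) = (1 - s)^k := by
    rw [← pow_add]; congr 1; omega
  rw [← hpow]
  field_simp

lemma altD : ∀ n : ℕ, ∀ a b : ℕ, b < n →
    ∑ j ∈ range (n+1), (-1:ℤ)^j * ((n.choose j) : ℤ) * (((a+j).choose b) : ℤ) = 0 := by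
  intro n
  induction n with
  | zero => exact fun a b hb => absurd hb (Nat.not_lt_zero b)
  | succ n ih =>
    intro a b hb
    cases b with
    | zero =>
      simp only [Nat.choose_zero_right, Nat.cast_one, mul_one]
      exact Int.alternating_sum_range_choose_of_ne (by omega)
    | succ b' =>
      set f : ℕ → ℤ := fun j => (-1:ℤ)^j * (((n+1).choose j) : ℤ) * (((a+j).choose (b'+1)) : ℤ) with hf
      set g : ℕ → ℤ := fun j => (-1:ℤ)^j * ((n.choose j) : ℤ) * (((a+j).choose (b'+1)) : ℤ) with hg
      set h : ℕ → ℤ := fun j => (-1:ℤ)^j * ((n.choose j) : ℤ) * (((a+1+j).choose (b'+1)) : ℤ) with hh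
      have e1 : ∑ j ∈ range (n+1+1), f j = (∑ j ∈ range (n+1), f (j+1)) + f 0 :=
        Finset.sum_range_succ' f (n+1)
      have e2 : ∀ j ∈ range (n+1), f (j+1) = -h j + g (j+1) := by
        intro j _
        simp only [hf, hg, hh]
        have hc : (((n+1).choose (j+1)) : ℤ) = (n.choose j : ℤ) + (n.choose (j+1) : ℤ) := by
          exact_mod_cast Nat.choose_succ_succ' n j
        have ha2 : a + (j+1) = a + 1 + j := by omega
        rw [hc, ha2]
        ring
      have e3 : ∑ j ∈ range (n+1), g (j+1) = (∑ j ∈ range (n+1), g j) + g (n+1) - g 0 := by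
        have := Finset.sum_range_succ' g (n+1)
        have h2 := Finset.sum_range_succ g (n+1)
        omega
      have e4 : g (n+1) = 0 := by
        simp only [hg, Nat.choose_succ_self, Nat.cast_zero]
        ring
      have e5 : f 0 = g 0 := by simp [hf, hg]
      have e6 : (∑ j ∈ range (n+1), g j) - (∑ j ∈ range (n+1), h j)
          = -(∑ j ∈ range (n+1), (-1:ℤ)^j * ((n.choose j) : ℤ) * (((a+j).choose b') : ℤ)) := by
        rw [← Finset.sum_sub_distrib, ← Finset.sum_neg_distrib]
        refine Finset.sum_congr rfl fun j _ => ?_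
        simp only [hg, hh]
        have hp : ((a+1+j).choose (b'+1) : ℤ) = ((a+j).choose b' : ℤ) + ((a+j).choose (b'+1) : ℤ) := by
          have : a+1+j = (a+j)+1 := by omega
          rw [this]
          exact_mod_cast Nat.choose_succ_succ' (a+j) b'
        rw [hp]
        ring
      rw [e1, Finset.sum_congr rfl e2, Finset.sum_add_distrib, e3, e4, e5]
      have := ih a b' (by omega)
      simp only [Finset.sum_neg_distrib] at *
      omega

lemma icc_split (k : ℕ) (F : ℕ → ℤ) :
    ∑ j ∈ range (k+1), F j = F 0 + ∑ j ∈ Icc 1 k, F j := by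
  rw [show range (k+1) = insert 0 (Icc 1 k) by ext x; simp [Finset.mem_range, Finset.mem_Icc]; omega]
  rw [Finset.sum_insert (by simp)]

lemma sumZ (k : ℕ) (hk : 1 ≤ k) :
    ∑ i ∈ Icc 1 k, ∑ j ∈ Icc 1 k,
      (-1:ℤ)^(i+j) * (k.choose i : ℤ) * (k.choose j : ℤ) * ((i+j-2).choose (i-1) : ℤ) = k := by
  have hinner : ∀ i ∈ Icc 1 k,
      (∑ j ∈ Icc 1 k, (-1:ℤ)^(i+j) * (k.choose i : ℤ) * (k.choose j : ℤ) * ((i+j-2).choose (i-1) : ℤ))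
      = if i = 1 then (k:ℤ) else 0 := by
    intro i hi
    obtain ⟨hi1, hik⟩ := Finset.mem_Icc.mp hi
    set F : ℕ → ℤ := fun j => (-1:ℤ)^(i+j) * (k.choose i : ℤ) * (k.choose j : ℤ) * ((i+j-2).choose (i-1) : ℤ) with hF
    have hsplit := icc_split k F
    by_cases h1 : i = 1
    · subst h1
      rw [if_pos rfl]
      have hfull : ∑ j ∈ range (k+1), F j = 0 := by
        have : ∀ j ∈ range (k+1), F j = (-k : ℤ) * ((-1:ℤ)^j * (k.choose j : ℤ)) := by
          intro j _
          simp only [hF]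
          have : (1+j-2).choose 0 = 1 := Nat.choose_zero_right _
          rw [this, Nat.choose_one_right]
          push_cast
          ring
        rw [Finset.sum_congr rfl this, ← Finset.mul_sum,
          Int.alternating_sum_range_choose_of_ne (by omega), mul_zero]
      have hF0 : F 0 = -k := by
        simp only [hF]
        norm_num
      rw [hfull] at hsplit
      linear_combination -hsplit - hF0
    · have hi2 : 2 ≤ i := by omega
      simp only [if_neg h1]
      have hfull : ∑ j ∈ range (k+1), F j = 0 := by
        have hc : ∀ j ∈ range (k+1), F j
            = ((-1:ℤ)^i * (k.choose i : ℤ)) * ((-1:ℤ)^j * (k.choose j : ℤ) * (((i-2)+j).choose (i-1) : ℤ)) := by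
          intro j _
          simp only [hF]
          rw [show i + j - 2 = (i-2) + j by omega]
          rw [pow_add]
          ring
        have haltD := altD k (i-2) (i-1) (by omega)
        rw [Finset.sum_congr rfl hc, ← Finset.mul_sum, haltD, mul_zero]
      have hF0 : F 0 = 0 := by
        simp only [hF]
        have hch : (i-2).choose (i-1) = 0 := Nat.choose_eq_zero_of_lt (by omega)
        rw [show i + 0 - 2 = i - 2 by omega, hch]
        push_cast
        ring
      rw [hfull] at hsplit
      linear_combination -hsplit - hF0
  rw [Finset.sum_congr rfl hinner, Finset.sum_ite_eq' (Icc 1 k) 1 (fun _ => (k:ℤ))]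
  rw [if_pos (Finset.mem_Icc.mpr ⟨le_refl 1, hk⟩)]

lemma outer_int (k : ℕ) (hk : 1 ≤ k) :
    (∮ s in C((0:ℂ), (1/16:ℝ)), ∮ w in C((0:ℂ), (1/16:ℝ)),
      (1 - s) ^ k * (1 - w) ^ k / ((1 - s - w) * s ^ k * w ^ k))
    = (2 * Real.pi * I)^2 * k := by
  rw [circleIntegral.integral_congr (c := (0:ℂ)) (R := (1/16:ℝ)) (by norm_num)
      (fun s hs => inner_int k hk s hs)]
  rw [int_finset_sum (range k)
      (fun m (s : ℂ) => (2 * Real.pi * I) * ((-1:ℂ)^(k-m-1) * (k.choose (k-m-1)))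
        * ((1 - s)^(k-m-1) * s ^ (-(k:ℤ))))
      (fun m _ => integrable_shape _ 1 (k-m-1) (-(k:ℤ)))]
  have hterm : ∀ m ∈ range k,
      (∮ s in C((0:ℂ), (1/16:ℝ)), (2 * Real.pi * I) * ((-1:ℂ)^(k-m-1) * (k.choose (k-m-1)))
        * ((1 - s)^(k-m-1) * s ^ (-(k:ℤ))))
      = (2 * Real.pi * I) * ((-1:ℂ)^(k-m-1) * (k.choose (k-m-1)))
        * ((2 * Real.pi * I) * ((k-m-1).choose (k-1)) * (-1:ℂ)^(k-1) * 1^((k-m-1)-(k-1))) := by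
    intro m _
    rw [show (fun s : ℂ => (2 * Real.pi * I) * ((-1:ℂ)^(k-m-1) * (k.choose (k-m-1)))
        * ((1 - s)^(k-m-1) * s ^ (-(k:ℤ))))
      = (fun s : ℂ => ((2 * Real.pi * I) * ((-1:ℂ)^(k-m-1) * (k.choose (k-m-1))))
        * ((1 - s)^(k-m-1) * s ^ (-(k:ℤ)))) from rfl]
    rw [circleIntegral.integral_const_mul, key 1 (k-m-1) k hk]
  rw [Finset.sum_congr rfl hterm]
  rw [Finset.sum_eq_single_of_mem 0 (mem_range.mpr (by omega))]
  · have hch : k.choose (k - 1) = k := by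
      rw [Nat.choose_symm hk, Nat.choose_one_right]
    have hch2 : (k - 0 - 1).choose (k-1) = 1 := by
      rw [show k - 0 - 1 = k - 1 by omega, Nat.choose_self]
    rw [show k - 0 - 1 = k - 1 by omega] at *
    rw [hch, hch2]
    have hsq : ((-1:ℂ))^(k-1) * ((-1:ℂ))^(k-1) = 1 := by
      rw [← pow_add]
      exact Even.neg_one_pow ⟨k-1, by ring⟩
    push_cast
    linear_combination ((2*Real.pi*I)^2 * k) * hsq
  · intro m hm hm0
    have hm' : m < k := mem_range.mp hm
    have hch0 : (k - m - 1).choose (k-1) = 0 := Nat.choose_eq_zero_of_lt (by omega)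
    rw [hch0]
    push_cast
    ring

end DCIproof
end Helpers

open DCIproof in
/-- The double contour integral
`(1/2πi)² ∮∮_{|s|=|w|=1/16} (1-s)^k (1-w)^k / ((1-s-w) s^k w^k)`
equals `∑_{i=1}^k ∑_{j=1}^k (-1)^{i+j} C(k,i) C(k,j) C(i+j-2, i-1)`, which equals `k`. -/
theorem double_contour_integral_eq_k (k : ℕ) (hk : 1 ≤ k) :
    ((2 * Real.pi * Complex.I)⁻¹) ^ 2 *
        (∮ s in C(0, 1 / 16), ∮ w in C(0, 1 / 16),
          (1 - s) ^ k * (1 - w) ^ k / ((1 - s - w) * s ^ k * w ^ k)) =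
      ∑ i ∈ Finset.Icc 1 k, ∑ j ∈ Finset.Icc 1 k,
        (-1 : ℂ) ^ (i + j) * (k.choose i : ℂ) * (k.choose j : ℂ) *
          ((i + j - 2).choose (i - 1) : ℂ) ∧
    (∑ i ∈ Finset.Icc 1 k, ∑ j ∈ Finset.Icc 1 k,
        (-1 : ℂ) ^ (i + j) * (k.choose i : ℂ) * (k.choose j : ℂ) *
          ((i + j - 2).choose (i - 1) : ℂ)) = (k : ℂ) := by
  have hC : (∑ i ∈ Finset.Icc 1 k, ∑ j ∈ Finset.Icc 1 k,
      (-1 : ℂ) ^ (i + j) * (k.choose i : ℂ) * (k.choose j : ℂ) *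
        ((i + j - 2).choose (i - 1) : ℂ)) = (k : ℂ) := by
    exact_mod_cast congrArg (fun z : ℤ => (z : ℂ)) (sumZ k hk)
  have hI : ((2 * Real.pi * Complex.I)⁻¹) ^ 2 *
      (∮ s in C(0, 1 / 16), ∮ w in C(0, 1 / 16),
        (1 - s) ^ k * (1 - w) ^ k / ((1 - s - w) * s ^ k * w ^ k)) = (k : ℂ) := by
    rw [outer_int k hk, inv_pow, inv_mul_cancel_left₀ (pow_ne_zero _ two_pi_I_ne)]
  exact ⟨hI.trans hC.symm, hC⟩
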